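/- (Block space as an $\ell^{r'}$-sum of slice spaces.) Let $1 < q < \infty$ and $1 < p < t < r < \infty$. Then $\vec{f} \in \mathcal{H}_{p'}^{t',r'}(\ell^{q'})$ if and only if $[\vec{f}] := \inf \big\{ (\sum_{j \in \mathbb{Z}} \|\vec{f}_j\|_{(\mathcal{E}_{p'}^{t',r'})_j(\ell^{q'})}^{r'})^{1/r'} : \vec{f} = \sum_{j \in \mathbb{Z}} \vec{f}_j \text{ a.e.}, \ \vec{f}_j \in (\mathcal{E}_{p'}^{t',r'})_j(\ell^{q'}) \big\} < \infty$; moreover $\|\vec{f}\|_{\mathcal{H}_{p'}^{t',r'}(\ell^{q'})} = [\vec{f}]$. -/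

import Mathlib

open MeasureTheory Filter ENNReal

noncomputable section

def dyadicCube (n : ℕ) (j : ℤ) (m : Fin n → ℤ) : Set (Fin n → ℝ) :=
  {x | ∀ i, (2:ℝ) ^ (-(j:ℝ)) * m i ≤ x i ∧ x i < (2:ℝ) ^ (-(j:ℝ)) * (m i + 1)}

def cubeVol (n : ℕ) (j : ℤ) : ℝ≥0∞ := (2:ℝ≥0∞) ^ (-((j:ℝ) * n))

def conj (a : ℝ) : ℝ := a / (a - 1)

def conjE (r : ℝ≥0∞) : ℝ := if r = ∞ then 1 else conj r.toReal

/-- The `ℓ^{q'}` norm of a real sequence, as an extended nonnegative real. -/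
def seqENorm (q' : ℝ) (v : ℕ → ℝ) : ℝ≥0∞ := (∑' i, ENNReal.ofReal |v i| ^ q') ^ (1/q')

/-- A `(p',t',ℓ^{q'})`-block supported on the dyadic cube `Q_{j,k}`. -/
def IsSeqBlock (n : ℕ) (p t q : ℝ) (j : ℤ) (k : Fin n → ℤ)
    (b : (Fin n → ℝ) → ℕ → ℝ) : Prop :=
  (∀ i, Measurable fun x => b x i) ∧ (∀ x, x ∉ dyadicCube n j k → b x = 0) ∧
    (∫⁻ x, seqENorm (conj q) (b x) ^ conj p) ^ (1 / conj p) ≤ cubeVol n j ^ (1/t - 1/p)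

/-- A representation of the `ℓ^{q'}`-valued function `f` as a sum of blocks. -/
def IsSeqBlockRep (n : ℕ) (p t q : ℝ) (f : (Fin n → ℝ) → ℕ → ℝ)
    (lam : ℤ × (Fin n → ℤ) → ℝ) (b : ℤ × (Fin n → ℤ) → (Fin n → ℝ) → ℕ → ℝ) : Prop :=
  (∀ jk : ℤ × (Fin n → ℤ), IsSeqBlock n p t q jk.1 jk.2 (b jk)) ∧
    ∀ᵐ x : Fin n → ℝ ∂volume, ∀ i, HasSum (fun jk => lam jk * b jk x i) (f x i)

/-- The norm of the `ℓ^{q'}`-valued block space `𝓗_{p'}^{t',r'}(ℓ^{q'})`. -/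
def seqBlockNorm (n : ℕ) (p t q r' : ℝ) (f : (Fin n → ℝ) → ℕ → ℝ) : ℝ≥0∞ :=
  ⨅ (lam : ℤ × (Fin n → ℤ) → ℝ) (b : ℤ × (Fin n → ℤ) → (Fin n → ℝ) → ℕ → ℝ)
    (_ : IsSeqBlockRep n p t q f lam b),
    (∑' jk : ℤ × (Fin n → ℤ), ENNReal.ofReal |lam jk| ^ r') ^ (1/r')

/-- The norm of the slice space `(𝓔_{p'}^{t',r'})_j(ℓ^{q'})` at generation `j`. -/
def sliceNorm (n : ℕ) (p t q r' : ℝ) (j : ℤ) (f : (Fin n → ℝ) → ℕ → ℝ) : ℝ≥0∞ :=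
  (∑' k : Fin n → ℤ, (cubeVol n j ^ (1/conj t - 1/conj p) *
    (∫⁻ x in dyadicCube n j k, seqENorm (conj q) (f x) ^ conj p) ^ (1/conj p)) ^ r') ^ (1/r')

/-- Membership in the slice space. -/
def MemSlice (n : ℕ) (p t q r' : ℝ) (j : ℤ) (f : (Fin n → ℝ) → ℕ → ℝ) : Prop :=
  (∀ i, Measurable fun x => f x i) ∧ sliceNorm n p t q r' j f < ∞

/-- An `ℝ≥0∞`-valued `(p',t',ℓ^{q'})`-block supported on `Q_{j,k}`. -/
def IsSeqBlockE (n : ℕ) (p t q : ℝ) (j : ℤ) (k : Fin n → ℤ)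
    (b : (Fin n → ℝ) → ℕ → ℝ≥0∞) : Prop :=
  (∀ i, Measurable fun x => b x i) ∧ (∀ x, x ∉ dyadicCube n j k → b x = 0) ∧
    (∫⁻ x, (∑' i, b x i ^ conj q) ^ (conj p / conj q)) ^ (1 / conj p) ≤
      cubeVol n j ^ (1/t - 1/p)

/-- The block norm for nonnegative (extended-real valued) `ℓ^{q'}`-valued functions. -/
def seqBlockNormE (n : ℕ) (p t q r' : ℝ) (F : (Fin n → ℝ) → ℕ → ℝ≥0∞) : ℝ≥0∞ :=
  ⨅ (lam : ℤ × (Fin n → ℤ) → ℝ≥0∞) (b : ℤ × (Fin n → ℤ) → (Fin n → ℝ) → ℕ → ℝ≥0∞)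
    (_ : (∀ jk : ℤ × (Fin n → ℤ), IsSeqBlockE n p t q jk.1 jk.2 (b jk)) ∧
      ∀ᵐ x : Fin n → ℝ ∂volume, ∀ i, F x i = ∑' jk : ℤ × (Fin n → ℤ), lam jk * b jk x i),
    (∑' jk : ℤ × (Fin n → ℤ), lam jk ^ r') ^ (1/r')

/-- The Euclidean ball in `ℝⁿ`. -/
def eBall (n : ℕ) (c : Fin n → ℝ) (R : ℝ) : Set (Fin n → ℝ) :=
  {y | ∑ i, (y i - c i) ^ 2 < R ^ 2}

/-- The powered Hardy–Littlewood maximal operator `𝓜_η` (over Euclidean balls). -/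
def maximalPow (n : ℕ) (η : ℝ) (g : (Fin n → ℝ) → ℝ) (x : Fin n → ℝ) : ℝ≥0∞ :=
  (⨆ (c : Fin n → ℝ) (R : ℝ) (_ : 0 < R) (_ : x ∈ eBall n c R),
    (volume (eBall n c R))⁻¹ * ∫⁻ y in eBall n c R, ENNReal.ofReal |g y| ^ η) ^ (1/η)



-- conj facts
lemma one_lt_conj {a : ℝ} (ha : 1 < a) : 1 < conj a := by
  have h1 : 0 < a - 1 := by linarith
  rw [conj, lt_div_iff₀ h1]; linarith

lemma conj_pos {a : ℝ} (ha : 1 < a) : 0 < conj a := lt_trans one_pos (one_lt_conj ha)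

lemma one_div_conj {a : ℝ} (ha : 1 < a) : 1 / conj a = 1 - 1 / a := by
  have h0 : a ≠ 0 := by linarith
  have h1 : a - 1 ≠ 0 := by intro h; linarith [sub_eq_zero.mp h]
  rw [conj]; field_simp

-- cubeVol facts
lemma cubeVol_ne_zero (n : ℕ) (j : ℤ) : cubeVol n j ≠ 0 := by
  rw [cubeVol]
  simp [ENNReal.rpow_eq_zero_iff]

lemma cubeVol_ne_top (n : ℕ) (j : ℤ) : cubeVol n j ≠ ⊤ := by
  rw [cubeVol, Ne, ENNReal.rpow_eq_top_iff]
  push_neg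
  constructor
  · intro h; norm_num at h
  · intro h; norm_num at h

-- dyadic cubes
def kIdx {n : ℕ} (j : ℤ) (x : Fin n → ℝ) : Fin n → ℤ := fun i => ⌊x i * 2 ^ (j:ℝ)⌋

lemma mem_dyadicCube_iff {n : ℕ} {j : ℤ} {k : Fin n → ℤ} {x : Fin n → ℝ} :
    x ∈ dyadicCube n j k ↔ kIdx j x = k := by
  have h2 : (0:ℝ) < 2 ^ (j:ℝ) := Real.rpow_pos_of_pos (by norm_num) _
  have hneg : (2:ℝ) ^ (-(j:ℝ)) = ((2:ℝ) ^ (j:ℝ))⁻¹ := Real.rpow_neg (by norm_num) _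
  constructor
  · intro h; funext i
    obtain ⟨h1, h2'⟩ := h i
    show ⌊x i * 2 ^ (j:ℝ)⌋ = k i
    rw [Int.floor_eq_iff]
    constructor
    · rw [hneg, inv_mul_eq_div, div_le_iff₀ h2] at h1; linarith
    · rw [hneg, inv_mul_eq_div, lt_div_iff₀ h2] at h2'; push_cast at h2' ⊢; linarith
  · intro h; intro i
    have := congrFun h i
    rw [kIdx] at this
    have h1 := Int.floor_le (x i * 2 ^ (j:ℝ))
    have h2' := Int.lt_floor_add_one (x i * 2 ^ (j:ℝ))
    rw [this] at h1 h2'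
    constructor
    · rw [hneg, inv_mul_eq_div, div_le_iff₀ h2]; linarith
    · rw [hneg, inv_mul_eq_div, lt_div_iff₀ h2]; push_cast; linarith

lemma mem_dyadicCube_kIdx {n : ℕ} (j : ℤ) (x : Fin n → ℝ) :
    x ∈ dyadicCube n j (kIdx j x) := mem_dyadicCube_iff.mpr rfl

lemma not_mem_dyadicCube_of_ne {n : ℕ} {j : ℤ} {k : Fin n → ℤ} {x : Fin n → ℝ}
    (h : kIdx j x ≠ k) : x ∉ dyadicCube n j k := fun hx => h (mem_dyadicCube_iff.mp hx)

lemma measurableSet_dyadicCube {n : ℕ} (j : ℤ) (k : Fin n → ℤ) :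
    MeasurableSet (dyadicCube n j k) := by
  have : dyadicCube n j k = ⋂ i, (fun x : Fin n → ℝ => x i) ⁻¹'
      (Set.Ico ((2:ℝ) ^ (-(j:ℝ)) * k i) ((2:ℝ) ^ (-(j:ℝ)) * (k i + 1))) := by
    ext x; simp [dyadicCube, Set.mem_iInter, Set.mem_Ico]
  rw [this]
  exact MeasurableSet.iInter fun i => (measurable_pi_apply i) measurableSet_Ico

-- glue measurability
lemma measurable_glue {ι : Type*} [Countable ι] {α β : Type*} [MeasurableSpace α]
    [MeasurableSpace β] (κ : α → ι) (hκ : ∀ i, MeasurableSet {x | κ x = i})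
    (h : ι → α → β) (hh : ∀ i, Measurable (h i)) :
    Measurable fun x => h (κ x) x := by
  intro E hE
  have : (fun x => h (κ x) x) ⁻¹' E = ⋃ i, ({x | κ x = i} ∩ (h i) ⁻¹' E) := by
    ext x
    simp only [Set.mem_preimage, Set.mem_iUnion, Set.mem_inter_iff, Set.mem_setOf_eq]
    constructor
    · intro hx; exact ⟨κ x, rfl, hx⟩
    · rintro ⟨i, hi, hx⟩; rw [hi]; exact hx
  rw [this]
  exact MeasurableSet.iUnion fun i => (hκ i).inter (hh i hE)

lemma measurable_kIdx_eq {n : ℕ} (j : ℤ) (k : Fin n → ℤ) :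
    MeasurableSet {x : Fin n → ℝ | kIdx j x = k} := by
  have : {x : Fin n → ℝ | kIdx j x = k} = dyadicCube n j k := by
    ext x; simp [mem_dyadicCube_iff]
  rw [this]; exact measurableSet_dyadicCube j k

-- rpow toolbox
lemma myRpowRpowInv {x : ℝ≥0∞} {s : ℝ} (hs : s ≠ 0) : (x ^ s) ^ (1/s) = x := by
  rw [← ENNReal.rpow_mul, mul_one_div, div_self hs, ENNReal.rpow_one]

lemma myRpowInvRpow {x : ℝ≥0∞} {s : ℝ} (hs : s ≠ 0) : (x ^ (1/s)) ^ s = x := by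
  rw [← ENNReal.rpow_mul, one_div_mul_cancel hs, ENNReal.rpow_one]

-- seqENorm lemmas
lemma seqENorm_smul {Q : ℝ} (hQ : 0 < Q) (c : ℝ) (v : ℕ → ℝ) :
    seqENorm Q (fun i => c * v i) = ENNReal.ofReal |c| * seqENorm Q v := by
  rw [seqENorm, seqENorm]
  have h1 : ∀ i, ENNReal.ofReal |c * v i| ^ Q
      = ENNReal.ofReal |c| ^ Q * ENNReal.ofReal |v i| ^ Q := by
    intro i
    rw [abs_mul, ENNReal.ofReal_mul (abs_nonneg c), ENNReal.mul_rpow_of_nonneg _ _ hQ.le]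
  simp_rw [h1]
  rw [ENNReal.tsum_mul_left, ENNReal.mul_rpow_of_nonneg _ _ (div_pos one_pos hQ).le,
    myRpowRpowInv hQ.ne']

lemma seqENorm_zero {Q : ℝ} (hQ : 0 < Q) : seqENorm Q (fun _ => (0:ℝ)) = 0 := by
  rw [seqENorm]
  show (∑' _ : ℕ, ENNReal.ofReal |(0:ℝ)| ^ Q) ^ (1/Q) = 0
  rw [abs_zero, ENNReal.ofReal_zero, ENNReal.zero_rpow_of_pos hQ, tsum_zero,
    ENNReal.zero_rpow_of_pos (div_pos one_pos hQ)]

lemma seqENorm_eq_zero_iff {Q : ℝ} (hQ : 0 < Q) {v : ℕ → ℝ} :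
    seqENorm Q v = 0 ↔ ∀ i, v i = 0 := by
  constructor
  · intro h i
    rw [seqENorm, ENNReal.rpow_eq_zero_iff] at h
    rcases h with ⟨h0, _⟩ | ⟨h0, hneg⟩
    · have := ENNReal.tsum_eq_zero.mp h0 i
      rw [ENNReal.rpow_eq_zero_iff] at this
      rcases this with ⟨h1, _⟩ | ⟨h1, _⟩
      · rw [ENNReal.ofReal_eq_zero] at h1
        have := abs_nonneg (v i); have : |v i| = 0 := le_antisymm h1 this
        exact abs_eq_zero.mp this
      · exact absurd h1 ENNReal.ofReal_ne_top
    · have : (0:ℝ) < 1/Q := div_pos one_pos hQ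
      linarith
  · intro h
    have : v = fun _ => (0:ℝ) := funext h
    rw [this]; exact seqENorm_zero hQ

lemma measurable_seqENorm {n : ℕ} {g : (Fin n → ℝ) → ℕ → ℝ}
    (hg : ∀ i, Measurable fun x => g x i) (Q : ℝ) :
    Measurable fun x => seqENorm Q (g x) := by
  have h1 : Measurable fun x => ∑' i, ENNReal.ofReal |g x i| ^ Q :=
    Measurable.ennreal_tsum fun i =>
      (ENNReal.continuous_rpow_const.measurable.comp
        ((hg i).abs.ennreal_ofReal))
  exact ENNReal.continuous_rpow_const.measurable.comp h1

lemma measurable_seqENorm_rpow {n : ℕ} {g : (Fin n → ℝ) → ℕ → ℝ}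
    (hg : ∀ i, Measurable fun x => g x i) (Q P : ℝ) :
    Measurable fun x => seqENorm Q (g x) ^ P :=
  ENNReal.continuous_rpow_const.measurable.comp (measurable_seqENorm hg Q)

section
variable {p t : ℝ} (n : ℕ) (j : ℤ)

lemma exp_sum (hp : 1 < p) (ht : 1 < t) :
    (1/conj t - 1/conj p) + (1/t - 1/p) = 0 := by
  rw [one_div_conj ht, one_div_conj hp]; ring

lemma cubeVol_rpow_ne_top (e : ℝ) : cubeVol n j ^ e ≠ ⊤ := by
  rw [Ne, ENNReal.rpow_eq_top_iff]
  push_neg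
  exact ⟨fun h => absurd h (cubeVol_ne_zero n j), fun h => absurd h (cubeVol_ne_top n j)⟩

lemma cubeVol_rpow_ne_zero (e : ℝ) : cubeVol n j ^ e ≠ 0 := by
  rw [Ne, ENNReal.rpow_eq_zero_iff]
  push_neg
  exact ⟨fun h => absurd h (cubeVol_ne_zero n j), fun h => absurd h (cubeVol_ne_top n j)⟩

lemma A_mul_B (hp : 1 < p) (ht : 1 < t) :
    cubeVol n j ^ (1/conj t - 1/conj p) * cubeVol n j ^ (1/t - 1/p) = 1 := by
  rw [← ENNReal.rpow_add _ _ (cubeVol_ne_zero n j) (cubeVol_ne_top n j), exp_sum hp ht,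
    ENNReal.rpow_zero]

lemma A_inv (hp : 1 < p) (ht : 1 < t) :
    (cubeVol n j ^ (1/conj t - 1/conj p))⁻¹ = cubeVol n j ^ (1/t - 1/p) := by
  rw [← ENNReal.rpow_neg]
  congr 1
  have := exp_sum (p := p) (t := t) hp ht
  linarith

end


-- MAIN DIRECTIONS


lemma slice_le_block (n : ℕ) (p t q r : ℝ)
    (hq : 1 < q) (hp : 1 < p) (hpt : p < t) (htr : t < r)
    (f : (Fin n → ℝ) → ℕ → ℝ) :
    (⨅ (F : ℤ → (Fin n → ℝ) → ℕ → ℝ)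
        (_ : ∀ j : ℤ, MemSlice n p t q (conj r) j (F j))
        (_ : ∀ᵐ x : Fin n → ℝ ∂volume, ∀ i,
          HasSum (fun j : ℤ => F j x i) (f x i)),
        (∑' j : ℤ, sliceNorm n p t q (conj r) j (F j) ^ conj r) ^ (1 / conj r)) ≤
      seqBlockNorm n p t q (conj r) f := by
  have ht : 1 < t := lt_trans hp hpt
  have hr : 1 < r := lt_trans ht htr
  have hR : 0 < conj r := conj_pos hr
  have hP : 0 < conj p := conj_pos hp
  have hQ : 0 < conj q := conj_pos hq
  rw [seqBlockNorm]
  refine le_iInf fun lam => le_iInf fun b => le_iInf fun hrep => ?_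
  by_cases hS : (∑' jk : ℤ × (Fin n → ℤ), ENNReal.ofReal |lam jk| ^ conj r) = ⊤
  · rw [hS, ENNReal.top_rpow_of_pos (div_pos one_pos hR)]
    exact le_top
  set F : ℤ → (Fin n → ℝ) → ℕ → ℝ :=
    fun j x i => lam (j, kIdx j x) * b (j, kIdx j x) x i with hF
  have hbmeas : ∀ jk, ∀ i, Measurable fun x => b jk x i := fun jk => (hrep.1 jk).1
  have hFmeas : ∀ j i, Measurable fun x => F j x i := by
    intro j i
    exact measurable_glue (kIdx j) (measurable_kIdx_eq j)
      (fun k x => lam (j, k) * b (j, k) x i)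
      (fun k => ((hbmeas (j, k) i).const_mul _))
  -- key slice bound
  have key : ∀ j, sliceNorm n p t q (conj r) j (F j) ^ conj r ≤
      ∑' k : Fin n → ℤ, ENNReal.ofReal |lam (j, k)| ^ conj r := by
    intro j
    rw [sliceNorm, myRpowInvRpow hR.ne']
    refine ENNReal.tsum_le_tsum fun k => ?_
    have hQmeas := measurableSet_dyadicCube (n := n) j k
    have step1 : (∫⁻ x in dyadicCube n j k, seqENorm (conj q) (F j x) ^ conj p) =
        ENNReal.ofReal |lam (j, k)| ^ conj p *
          ∫⁻ x in dyadicCube n j k, seqENorm (conj q) (b (j, k) x) ^ conj p := by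
      rw [← MeasureTheory.lintegral_const_mul _
        (measurable_seqENorm_rpow (hbmeas (j, k)) _ _)]
      refine MeasureTheory.setLIntegral_congr_fun hQmeas
        (fun x hx => ?_)
      have hk : kIdx j x = k := mem_dyadicCube_iff.mp hx
      have hFx : F j x = fun i => lam (j, k) * b (j, k) x i := by
        funext i
        show lam (j, kIdx j x) * b (j, kIdx j x) x i = lam (j, k) * b (j, k) x i
        rw [hk]
      rw [hFx, seqENorm_smul hQ, ENNReal.mul_rpow_of_nonneg _ _ hP.le]
    have step2 : (∫⁻ x in dyadicCube n j k, seqENorm (conj q) (F j x) ^ conj p)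
        ^ (1 / conj p) ≤ ENNReal.ofReal |lam (j, k)| * cubeVol n j ^ (1/t - 1/p) := by
      rw [step1]
      calc (ENNReal.ofReal |lam (j, k)| ^ conj p *
            ∫⁻ x in dyadicCube n j k, seqENorm (conj q) (b (j, k) x) ^ conj p) ^ (1 / conj p)
          ≤ (ENNReal.ofReal |lam (j, k)| ^ conj p *
            ∫⁻ x, seqENorm (conj q) (b (j, k) x) ^ conj p) ^ (1 / conj p) := by
            refine ENNReal.rpow_le_rpow ?_ (div_pos one_pos hP).le
            exact mul_le_mul_right (MeasureTheory.setLIntegral_le_lintegral _ _) _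
        _ = ENNReal.ofReal |lam (j, k)| *
            (∫⁻ x, seqENorm (conj q) (b (j, k) x) ^ conj p) ^ (1 / conj p) := by
            rw [ENNReal.mul_rpow_of_nonneg _ _ (div_pos one_pos hP).le,
              myRpowRpowInv hP.ne']
        _ ≤ ENNReal.ofReal |lam (j, k)| * cubeVol n j ^ (1/t - 1/p) :=
            mul_le_mul_right (hrep.1 (j, k)).2.2 _
    calc (cubeVol n j ^ (1/conj t - 1/conj p) *
          (∫⁻ x in dyadicCube n j k, seqENorm (conj q) (F j x) ^ conj p) ^ (1/conj p))
            ^ conj r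
        ≤ (cubeVol n j ^ (1/conj t - 1/conj p) *
          (ENNReal.ofReal |lam (j, k)| * cubeVol n j ^ (1/t - 1/p))) ^ conj r :=
          ENNReal.rpow_le_rpow (mul_le_mul_right step2 _) hR.le
      _ = ENNReal.ofReal |lam (j, k)| ^ conj r := by
          rw [show cubeVol n j ^ (1/conj t - 1/conj p) *
              (ENNReal.ofReal |lam (j, k)| * cubeVol n j ^ (1/t - 1/p)) =
              ENNReal.ofReal |lam (j, k)| *
              (cubeVol n j ^ (1/conj t - 1/conj p) * cubeVol n j ^ (1/t - 1/p)) by ring,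
            A_mul_B n j hp ht, mul_one]
  -- membership in slice spaces
  have hmem : ∀ j : ℤ, MemSlice n p t q (conj r) j (F j) := by
    intro j
    refine ⟨hFmeas j, ?_⟩
    have h1 : sliceNorm n p t q (conj r) j (F j) ^ conj r ≤
        ∑' jk : ℤ × (Fin n → ℤ), ENNReal.ofReal |lam jk| ^ conj r := by
      refine le_trans (key j) ?_
      refine le_trans (ENNReal.le_tsum
        (f := fun a => ∑' k : Fin n → ℤ, ENNReal.ofReal |lam (a, k)| ^ conj r) j) ?_
      exact le_of_eq
        (ENNReal.tsum_prod (f := fun a k => ENNReal.ofReal |lam (a, k)| ^ conj r)).symm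
    rw [lt_top_iff_ne_top]
    intro htop
    rw [htop, ENNReal.top_rpow_of_pos hR] at h1
    exact hS (top_le_iff.mp h1)
  -- a.e. sum
  have hsum : ∀ᵐ x : Fin n → ℝ ∂volume, ∀ i,
      HasSum (fun j : ℤ => F j x i) (f x i) := by
    filter_upwards [hrep.2] with x hx i
    have hfib : ∀ j, HasSum (fun k => lam (j, k) * b (j, k) x i) (F j x i) := by
      intro j
      have h0 : ∀ k', k' ≠ kIdx j x → lam (j, k') * b (j, k') x i = 0 := by
        intro k' hk'
        have hx' : x ∉ dyadicCube n j k' := not_mem_dyadicCube_of_ne (Ne.symm hk')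
        have hb0 := (hrep.1 (j, k')).2.1 x hx'
        rw [hb0]
        simp
      exact hasSum_single (kIdx j x) h0
    exact (hx i).prod_fiberwise hfib
  refine le_trans (iInf_le_of_le F (iInf_le_of_le hmem (iInf_le _ hsum))) ?_
  refine ENNReal.rpow_le_rpow ?_ (div_pos one_pos hR).le
  refine le_trans (ENNReal.tsum_le_tsum key) ?_
  rw [← ENNReal.tsum_prod]

lemma isSeqBlock_zero (n : ℕ) (p t q : ℝ) (hp : 1 < p) (hq : 1 < q) (j : ℤ)
    (k : Fin n → ℤ) :
    IsSeqBlock n p t q j k (fun _ _ => 0) := by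
  refine ⟨fun i => measurable_const, fun x _ => rfl, ?_⟩
  have h : ∀ x : Fin n → ℝ,
      seqENorm (conj q) ((fun (_ : Fin n → ℝ) (_ : ℕ) => (0:ℝ)) x) ^ conj p = 0 := by
    intro x
    show seqENorm (conj q) (fun _ => (0:ℝ)) ^ conj p = 0
    rw [seqENorm_zero (conj_pos hq), ENNReal.zero_rpow_of_pos (conj_pos hp)]
  rw [MeasureTheory.lintegral_congr h, MeasureTheory.lintegral_zero,
    ENNReal.zero_rpow_of_pos (div_pos one_pos (conj_pos hp))]
  exact zero_le

lemma block_le_slice (n : ℕ) (p t q r : ℝ)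
    (hq : 1 < q) (hp : 1 < p) (hpt : p < t) (htr : t < r)
    (f : (Fin n → ℝ) → ℕ → ℝ) :
    seqBlockNorm n p t q (conj r) f ≤
      ⨅ (F : ℤ → (Fin n → ℝ) → ℕ → ℝ)
        (_ : ∀ j : ℤ, MemSlice n p t q (conj r) j (F j))
        (_ : ∀ᵐ x : Fin n → ℝ ∂volume, ∀ i,
          HasSum (fun j : ℤ => F j x i) (f x i)),
        (∑' j : ℤ, sliceNorm n p t q (conj r) j (F j) ^ conj r) ^ (1 / conj r) := by
  classical
  have ht : 1 < t := lt_trans hp hpt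
  have hr : 1 < r := lt_trans ht htr
  have hR : 0 < conj r := conj_pos hr
  have hP : 0 < conj p := conj_pos hp
  have hQ : 0 < conj q := conj_pos hq
  refine le_iInf fun F => le_iInf fun hmem => le_iInf fun hsum => ?_
  set A : ℤ → ℝ≥0∞ := fun j => cubeVol n j ^ (1/conj t - 1/conj p) with hA
  set I : ℤ × (Fin n → ℤ) → ℝ≥0∞ := fun jk =>
    (∫⁻ x in dyadicCube n jk.1 jk.2, seqENorm (conj q) (F jk.1 x) ^ conj p) ^ (1/conj p)
    with hI
  set L : ℤ × (Fin n → ℤ) → ℝ≥0∞ := fun jk => A jk.1 * I jk with hL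
  have hAne0 : ∀ j, A j ≠ 0 := fun j => cubeVol_rpow_ne_zero n j _
  have hAnetop : ∀ j, A j ≠ ⊤ := fun j => cubeVol_rpow_ne_top n j _
  have hslice : ∀ j, sliceNorm n p t q (conj r) j (F j) =
      (∑' k : Fin n → ℤ, L (j, k) ^ conj r) ^ (1 / conj r) := fun j => rfl
  have hsliceFin : ∀ j, (∑' k : Fin n → ℤ, L (j, k) ^ conj r) ≠ ⊤ := by
    intro j htop
    have h2 := (hmem j).2
    rw [hslice j, htop, ENNReal.top_rpow_of_pos (div_pos one_pos hR)] at h2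
    exact absurd h2 (lt_irrefl _)
  have hLnetop : ∀ jk, L jk ≠ ⊤ := by
    intro jk htop
    apply hsliceFin jk.1
    rw [eq_top_iff]
    refine le_trans (le_of_eq ?_) (ENNReal.le_tsum (f := fun k => L (jk.1, k) ^ conj r) jk.2)
    rw [show L (jk.1, jk.2) = L jk from rfl, htop, ENNReal.top_rpow_of_pos hR]
  set lam : ℤ × (Fin n → ℤ) → ℝ := fun jk => (L jk).toReal with hlam
  set b : ℤ × (Fin n → ℤ) → (Fin n → ℝ) → ℕ → ℝ := fun jk =>
    if L jk = 0 then (fun _ _ => 0) else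
      fun x i => (dyadicCube n jk.1 jk.2).indicator (fun y => F jk.1 y i) x / lam jk
    with hb
  -- blocks
  have hblocks : ∀ jk : ℤ × (Fin n → ℤ), IsSeqBlock n p t q jk.1 jk.2 (b jk) := by
    intro jk
    by_cases hL0 : L jk = 0
    · have hbz : b jk = fun _ _ => 0 := by rw [hb]; exact if_pos hL0
      rw [hbz]
      exact isSeqBlock_zero n p t q hp hq jk.1 jk.2
    · have hIne0 : I jk ≠ 0 := by
        intro h0; exact hL0 (by rw [hL]; show A jk.1 * I jk = 0; rw [h0, mul_zero])
      have hInetop : I jk ≠ ⊤ := by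
        intro h0
        apply hLnetop jk
        rw [hL]; show A jk.1 * I jk = ⊤
        rw [h0]; exact ENNReal.mul_top (hAne0 jk.1)
      have hlampos : 0 < lam jk := ENNReal.toReal_pos hL0 (hLnetop jk)
      have hofReal : ENNReal.ofReal (lam jk) = L jk :=
        ENNReal.ofReal_toReal (hLnetop jk)
      refine ⟨?_, ?_, ?_⟩
      · intro i; simp only [hb, if_neg hL0]
        exact (((hmem jk.1).1 i).indicator (measurableSet_dyadicCube _ _)).div_const _
      · intro x hx; simp only [hb, if_neg hL0]
        funext i
        rw [Set.indicator_of_notMem hx, zero_div]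
        simp
      · simp only [hb, if_neg hL0]
        have hφ : ∀ x : Fin n → ℝ, seqENorm (conj q)
            (fun i => (dyadicCube n jk.1 jk.2).indicator (fun y => F jk.1 y i) x / lam jk)
              ^ conj p =
            (dyadicCube n jk.1 jk.2).indicator
              (fun y => (L jk)⁻¹ ^ conj p * seqENorm (conj q) (F jk.1 y) ^ conj p) x := by
          intro x
          by_cases hx : x ∈ dyadicCube n jk.1 jk.2
          · rw [Set.indicator_of_mem hx]
            have hbx : (fun i => (dyadicCube n jk.1 jk.2).indicator
                (fun y => F jk.1 y i) x / lam jk) =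
                fun i => (1 / lam jk) * F jk.1 x i := by
              funext i; rw [Set.indicator_of_mem hx]; ring
            rw [hbx, seqENorm_smul hQ, ENNReal.mul_rpow_of_nonneg _ _ hP.le]
            congr 2
            rw [abs_of_pos (by positivity : (0:ℝ) < 1 / lam jk), one_div,
              ENNReal.ofReal_inv_of_pos hlampos, hofReal]
          · rw [Set.indicator_of_notMem hx]
            have hbx : (fun i => (dyadicCube n jk.1 jk.2).indicator
                (fun y => F jk.1 y i) x / lam jk) = fun _ : ℕ => (0:ℝ) := by
              funext i; rw [Set.indicator_of_notMem hx, zero_div]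
            rw [hbx, seqENorm_zero hQ, ENNReal.zero_rpow_of_pos hP]
        refine le_of_eq ?_
        calc (∫⁻ x, seqENorm (conj q)
              (fun i => (dyadicCube n jk.1 jk.2).indicator (fun y => F jk.1 y i) x / lam jk)
                ^ conj p) ^ (1 / conj p)
            = ((L jk)⁻¹ ^ conj p *
                ∫⁻ x in dyadicCube n jk.1 jk.2,
                  seqENorm (conj q) (F jk.1 x) ^ conj p) ^ (1 / conj p) := by
              rw [show (∫⁻ x, seqENorm (conj q)
                  (fun i => (dyadicCube n jk.1 jk.2).indicator (fun y => F jk.1 y i) x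
                    / lam jk) ^ conj p) =
                  ∫⁻ x, (dyadicCube n jk.1 jk.2).indicator
                    (fun y => (L jk)⁻¹ ^ conj p *
                      seqENorm (conj q) (F jk.1 y) ^ conj p) x from
                MeasureTheory.lintegral_congr hφ]
              rw [MeasureTheory.lintegral_indicator (measurableSet_dyadicCube _ _)]
              rw [MeasureTheory.lintegral_const_mul _
                (measurable_seqENorm_rpow (hmem jk.1).1 _ _)]
          _ = (L jk)⁻¹ * I jk := by
              rw [ENNReal.mul_rpow_of_nonneg _ _ (div_pos one_pos hP).le,
                myRpowRpowInv hP.ne']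
          _ = cubeVol n jk.1 ^ (1/t - 1/p) := by
              rw [hL]
              show (A jk.1 * I jk)⁻¹ * I jk = _
              rw [ENNReal.mul_inv (Or.inl (hAne0 jk.1)) (Or.inl (hAnetop jk.1)),
                mul_assoc, ENNReal.inv_mul_cancel hIne0 hInetop, mul_one, hA]
              exact A_inv n jk.1 hp ht
  -- a.e. vanishing on zero-L cubes
  have hzero : ∀ᵐ x : Fin n → ℝ ∂volume, ∀ jk : ℤ × (Fin n → ℤ), L jk = 0 →
      x ∈ dyadicCube n jk.1 jk.2 → ∀ i, F jk.1 x i = 0 := by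
    rw [ae_all_iff]
    intro jk
    by_cases hL0 : L jk = 0
    · have hI0 : I jk = 0 := by
        by_contra hI0
        exact (mul_ne_zero (hAne0 jk.1) hI0) hL0
      have hint : (∫⁻ x in dyadicCube n jk.1 jk.2,
          seqENorm (conj q) (F jk.1 x) ^ conj p) = 0 := by
        have := hI0
        rw [hI] at this
        simp only at this
        rw [ENNReal.rpow_eq_zero_iff] at this
        rcases this with ⟨h1, _⟩ | ⟨_, h2⟩
        · exact h1
        · exact absurd h2 (not_lt.mpr (div_pos one_pos hP).le)
      have h2 := (MeasureTheory.lintegral_eq_zero_iff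
        (measurable_seqENorm_rpow (hmem jk.1).1 (conj q) (conj p))).mp hint
      have h2' := (MeasureTheory.ae_restrict_iff'
        (μ := volume) (measurableSet_dyadicCube (n := n) jk.1 jk.2)).mp h2
      filter_upwards [h2'] with x hx _ hxQ i
      have h3 : seqENorm (conj q) (F jk.1 x) ^ conj p = 0 := hx hxQ
      rw [ENNReal.rpow_eq_zero_iff] at h3
      rcases h3 with ⟨h4, _⟩ | ⟨_, h5⟩
      · exact (seqENorm_eq_zero_iff hQ).mp h4 i
      · exact absurd h5 (not_lt.mpr hP.le)
    · filter_upwards with x h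
      exact absurd h hL0
  -- a.e. representation
  have hrep2 : ∀ᵐ x : Fin n → ℝ ∂volume, ∀ i,
      HasSum (fun jk : ℤ × (Fin n → ℤ) => lam jk * b jk x i) (f x i) := by
    filter_upwards [hsum, hzero] with x hx hz i
    have hfib0 : ∀ j : ℤ, ∀ k, k ≠ kIdx j x → lam (j, k) * b (j, k) x i = 0 := by
      intro j k hk
      have hxq : x ∉ dyadicCube n j k := not_mem_dyadicCube_of_ne (Ne.symm hk)
      by_cases hL0 : L (j, k) = 0
      · simp only [hb, if_pos hL0, mul_zero]
      · simp only [hb, if_neg hL0]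
        rw [Set.indicator_of_notMem hxq, zero_div, mul_zero]
    have hfibval : ∀ j : ℤ, lam (j, kIdx j x) * b (j, kIdx j x) x i = F j x i := by
      intro j
      by_cases hL0 : L (j, kIdx j x) = 0
      · have h1 : F j x i = 0 := hz (j, kIdx j x) hL0 (mem_dyadicCube_kIdx j x) i
        have h2 : lam (j, kIdx j x) = 0 := by
          rw [hlam]; show (L (j, kIdx j x)).toReal = 0; rw [hL0]; exact ENNReal.toReal_zero
        rw [h2, zero_mul, h1]
      · have hlampos : 0 < lam (j, kIdx j x) := ENNReal.toReal_pos hL0 (hLnetop _)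
        simp only [hb, if_neg hL0]
        rw [Set.indicator_of_mem (mem_dyadicCube_kIdx j x), mul_comm,
          div_mul_cancel₀ _ hlampos.ne']
    have hfib : ∀ j : ℤ, HasSum (fun k => lam (j, k) * b (j, k) x i) (F j x i) := by
      intro j
      have h := hasSum_single (f := fun k => lam (j, k) * b (j, k) x i) (kIdx j x)
        (fun k hk => hfib0 j k hk)
      rw [show lam (j, kIdx j x) * b (j, kIdx j x) x i = F j x i
        from hfibval j] at h
      exact h
    have habs : Summable fun jk : ℤ × (Fin n → ℤ) => |lam jk * b jk x i| := by
      rw [summable_prod_of_nonneg (fun jk => abs_nonneg _)]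
      constructor
      · intro j
        refine summable_of_ne_finset_zero (s := {kIdx j x}) fun k hk => ?_
        rw [hfib0 j k (by simpa using hk), abs_zero]
      · have heq : (fun j : ℤ => ∑' k, |lam (j, k) * b (j, k) x i|) =
            fun j => |F j x i| := by
          funext j
          rw [tsum_eq_single (kIdx j x) (fun k hk => by rw [hfib0 j k hk, abs_zero]),
            hfibval j]
        rw [heq]
        exact ((hx i).summable).abs
    have hsummable : Summable fun jk : ℤ × (Fin n → ℤ) => lam jk * b jk x i :=
      habs.of_abs
    have hS := hsummable.hasSum
    have h2 : HasSum (fun j : ℤ => F j x i)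
        (∑' jk : ℤ × (Fin n → ℤ), lam jk * b jk x i) := hS.prod_fiberwise hfib
    have h3 : (∑' jk : ℤ × (Fin n → ℤ), lam jk * b jk x i) = f x i := h2.unique (hx i)
    rwa [h3] at hS
  -- norm computation
  have hlamnorm : (∑' jk : ℤ × (Fin n → ℤ), ENNReal.ofReal |lam jk| ^ conj r) =
      ∑' j : ℤ, sliceNorm n p t q (conj r) j (F j) ^ conj r := by
    have h1 : ∀ jk : ℤ × (Fin n → ℤ),
        ENNReal.ofReal |lam jk| ^ conj r = L jk ^ conj r := by
      intro jk
      rw [hlam]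
      show ENNReal.ofReal |(L jk).toReal| ^ conj r = _
      rw [abs_of_nonneg ENNReal.toReal_nonneg, ENNReal.ofReal_toReal (hLnetop jk)]
    calc (∑' jk : ℤ × (Fin n → ℤ), ENNReal.ofReal |lam jk| ^ conj r)
        = ∑' jk : ℤ × (Fin n → ℤ), L jk ^ conj r := tsum_congr h1
      _ = ∑' j : ℤ, ∑' k : Fin n → ℤ, L (j, k) ^ conj r :=
          ENNReal.tsum_prod (f := fun j k => L (j, k) ^ conj r)
      _ = ∑' j : ℤ, sliceNorm n p t q (conj r) j (F j) ^ conj r := by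
          refine tsum_congr fun j => ?_
          rw [hslice j, myRpowInvRpow hR.ne']
  calc seqBlockNorm n p t q (conj r) f
      ≤ (∑' jk : ℤ × (Fin n → ℤ), ENNReal.ofReal |lam jk| ^ conj r) ^ (1 / conj r) := by
        rw [seqBlockNorm]
        exact iInf_le_of_le lam (iInf_le_of_le b (iInf_le _ ⟨hblocks, hrep2⟩))
    _ = (∑' j : ℤ, sliceNorm n p t q (conj r) j (F j) ^ conj r) ^ (1 / conj r) := by
        rw [hlamnorm]

theorem block_space_via_slice_spaces (n : ℕ) (p t q r : ℝ)
    (hq : 1 < q) (hp : 1 < p) (hpt : p < t) (htr : t < r)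
    (f : (Fin n → ℝ) → ℕ → ℝ) (hf : ∀ i, Measurable fun x => f x i) :
    (seqBlockNorm n p t q (conj r) f < ∞ ↔
      (⨅ (F : ℤ → (Fin n → ℝ) → ℕ → ℝ)
        (_ : ∀ j : ℤ, MemSlice n p t q (conj r) j (F j))
        (_ : ∀ᵐ x : Fin n → ℝ ∂volume, ∀ i,
          HasSum (fun j : ℤ => F j x i) (f x i)),
        (∑' j : ℤ, sliceNorm n p t q (conj r) j (F j) ^ conj r) ^ (1 / conj r)) < ∞) ∧
    seqBlockNorm n p t q (conj r) f =
      ⨅ (F : ℤ → (Fin n → ℝ) → ℕ → ℝ)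
        (_ : ∀ j : ℤ, MemSlice n p t q (conj r) j (F j))
        (_ : ∀ᵐ x : Fin n → ℝ ∂volume, ∀ i,
          HasSum (fun j : ℤ => F j x i) (f x i)),
        (∑' j : ℤ, sliceNorm n p t q (conj r) j (F j) ^ conj r) ^ (1 / conj r) := by
  have h := le_antisymm (block_le_slice n p t q r hq hp hpt htr f)
    (slice_le_block n p t q r hq hp hpt htr f)
  exact ⟨by rw [h], h⟩

end
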